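/- For the walk on ℕ starting at 0 with rule (k) ↝ (0)(1)...(k-2)(k+1) (all backward/stay moves to positions ≤ k-2 plus a forward jump to k+1; moves to k-1 and k forbidden), the generating function G = zF(z,1) of walks counted by length (shifted) satisfies the algebraic equation G(1+G) = z(1 + 2G + G² + G³). -/

import Mathlib

open PowerSeries

namespace Stmt12Aux

open Finset

lemma coeff_mul_congr {P P' Q : PowerSeries ℚ} {N : ℕ}
    (h : ∀ p ≤ N, (coeff p) P = (coeff p) P') :
    (coeff N) (P * Q) = (coeff N) (P' * Q) := by
  rw [coeff_mul, coeff_mul]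
  refine Finset.sum_congr rfl fun pq hpq => ?_
  rw [Finset.HasAntidiagonal.mem_antidiagonal] at hpq
  rw [h pq.1 (by omega)]

lemma coeff_X_mul_congr {P P' : PowerSeries ℚ} {N : ℕ}
    (h : ∀ p < N, (coeff p) P = (coeff p) P') :
    (coeff N) (X * P) = (coeff N) (X * P') := by
  cases N with
  | zero => simp
  | succ m => rw [coeff_succ_X_mul, coeff_succ_X_mul, h m (Nat.lt_succ_self m)]

variable (c : ℕ → ℕ → ℕ)

/-- The series of walks ending at `k`. -/
noncomputable def A (k : ℕ) : PowerSeries ℚ := PowerSeries.mk fun n => (c n k : ℚ)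

/-- Tail sums. -/
noncomputable def T (a : ℕ) : PowerSeries ℚ :=
  PowerSeries.mk fun n => ∑ j ∈ Finset.Icc a n, (c n j : ℚ)

lemma coeff_A (n k : ℕ) : coeff n (A c k) = (c n k : ℚ) := coeff_mk _ _
lemma coeff_T (n a : ℕ) : coeff n (T c a) = ∑ j ∈ Finset.Icc a n, (c n j : ℚ) := coeff_mk _ _

/-- Partial sums of `A` agree with `T` in low coefficients. -/
lemma sumA_coeff (hbound : ∀ n k, n < k → c n k = 0) (a m r : ℕ) (hr : r < m) :
    coeff r (∑ i ∈ range (m - a), A c (a + i)) = coeff r (T c a) := by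
  rw [map_sum, coeff_T]
  simp only [coeff_A]
  rw [← Finset.Ico_add_one_right_eq_Icc, Finset.sum_Ico_eq_sum_range]
  refine (Finset.sum_subset ?_ ?_).symm
  · intro i hi
    simp only [Finset.mem_range] at hi ⊢
    omega
  · intro i _ hi
    simp only [Finset.mem_range, not_lt] at hi
    have hlt : r < a + i := by omega
    rw [hbound r (a + i) hlt, Nat.cast_zero]

/-- `R` lemma: assuming the star identity up to index `M`,
`T (a+1)` looks like `X * T a * A 0` in coefficients up to `M`. -/
lemma Rlem (hbound : ∀ n k, n < k → c n k = 0) (M : ℕ)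
    (hs : ∀ p ≤ M, ∀ k, coeff p (A c (k + 1)) = coeff p (X * A c k * A c 0)) :
    ∀ p ≤ M, ∀ a, coeff p (T c (a + 1)) = coeff p (X * T c a * A c 0) := by
  intro p hp a
  have e1 : coeff p (T c (a + 1)) = ∑ i ∈ range (p - a), (c p (a + 1 + i) : ℚ) := by
    rw [coeff_T, ← Finset.Ico_add_one_right_eq_Icc, Finset.sum_Ico_eq_sum_range]
    have h2 : p + 1 - (a + 1) = p - a := by omega
    rw [h2]
  have e2 : ∀ i, (c p (a + 1 + i) : ℚ) = coeff p (X * A c (a + i) * A c 0) := by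
    intro i
    have h := hs p hp (a + i)
    rw [coeff_A] at h
    have h3 : a + 1 + i = a + i + 1 := by omega
    rw [h3, h]
  have e3 : coeff p (X * (∑ i ∈ range (p - a), A c (a + i)) * A c 0)
      = ∑ i ∈ range (p - a), coeff p (X * A c (a + i) * A c 0) := by
    rw [Finset.mul_sum, Finset.sum_mul, map_sum]
  rw [e1, Finset.sum_congr rfl fun i _ => e2 i, ← e3, mul_assoc, mul_assoc]
  apply coeff_X_mul_congr
  intro q hq
  apply coeff_mul_congr
  intro r hr
  exact sumA_coeff c hbound a p r (by omega)

/-- `Q` lemma. -/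
lemma Qlem (hbound : ∀ n k, n < k → c n k = 0) (M : ℕ)
    (hs : ∀ p ≤ M, ∀ k, coeff p (A c (k + 1)) = coeff p (X * A c k * A c 0)) :
    ∀ k, ∀ N ≤ M, coeff N (T c (k + 2) * A c 0) = coeff N (A c k * T c 2) := by
  intro k
  induction k with
  | zero => intro N _; rw [mul_comm]
  | succ k IHk =>
    intro N hN
    have s1 : coeff N (T c (k + 3) * A c 0)
        = coeff N ((X * T c (k + 2) * A c 0) * A c 0) := by
      apply coeff_mul_congr
      intro p hp
      exact Rlem c hbound M hs p (le_trans hp hN) (k + 2)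
    rw [s1]
    rw [show (X * T c (k + 2) * A c 0) * A c 0
        = X * ((T c (k + 2) * A c 0) * A c 0) from by ring]
    have s2 : coeff N (X * ((T c (k + 2) * A c 0) * A c 0))
        = coeff N (X * ((A c k * T c 2) * A c 0)) := by
      apply coeff_X_mul_congr
      intro q hq
      apply coeff_mul_congr
      intro r hr
      exact IHk r (by omega)
    rw [s2]
    have s3 : coeff N (A c (k + 1) * T c 2)
        = coeff N ((X * A c k * A c 0) * T c 2) := by
      apply coeff_mul_congr
      intro p hp
      exact hs p (le_trans hp hN) k
    rw [s3]
    congr 1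
    ring

/-- `A 0 = 1 + X * T 2`. -/
lemma A0_eq (h0 : ∀ k, c 0 k = if k = 0 then 1 else 0)
    (hstep : ∀ n k, c (n + 1) k =
      (if 1 ≤ k then c n (k - 1) else 0) + ∑ j ∈ Finset.Icc (k + 2) n, c n j) :
    A c 0 = 1 + X * T c 2 := by
  ext n
  cases n with
  | zero =>
    rw [coeff_A, h0 0]
    simp
  | succ m =>
    rw [coeff_A, map_add, coeff_succ_X_mul, coeff_T, hstep m 0]
    have h1 : coeff (m + 1) (1 : PowerSeries ℚ) = 0 := by
      simp [coeff_one]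
    rw [h1, zero_add]
    push_cast
    simp

/-- The star identity: `c n (k+1) = (X * A k * A 0)_n`. -/
lemma star (hbound : ∀ n k, n < k → c n k = 0)
    (h0 : ∀ k, c 0 k = if k = 0 then 1 else 0)
    (hstep : ∀ n k, c (n + 1) k =
      (if 1 ≤ k then c n (k - 1) else 0) + ∑ j ∈ Finset.Icc (k + 2) n, c n j) :
    ∀ n k, coeff n (A c (k + 1)) = coeff n (X * A c k * A c 0) := by
  intro n
  induction n using Nat.strong_induction_on with
  | _ n IH =>
    match n with
    | 0 =>
      intro k
      rw [coeff_A, h0 (k + 1), mul_assoc]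
      simp
    | Nat.succ m =>
      intro k
      have hsm : ∀ p ≤ m, ∀ k, coeff p (A c (k + 1)) = coeff p (X * A c k * A c 0) :=
        fun p hp => IH p (by omega)
      rw [coeff_A, hstep m (k + 1)]
      have hif : (if 1 ≤ k + 1 then c m (k + 1 - 1) else 0) = c m k := by simp
      rw [hif]
      push_cast
      -- RHS
      rw [mul_assoc, coeff_succ_X_mul]
      have hsplit : A c k * A c 0 = A c k + X * (A c k * T c 2) := by
        rw [A0_eq c h0 hstep]
        ring
      rw [hsplit, map_add, coeff_A]
      have key : (∑ j ∈ Finset.Icc (k + 3) m, (c m j : ℚ))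
          = coeff m (X * (A c k * T c 2)) := by
        have hR := Rlem c hbound m hsm m le_rfl (k + 2)
        rw [coeff_T] at hR
        have h23 : k + 2 + 1 = k + 3 := rfl
        rw [h23] at hR
        rw [hR, mul_assoc]
        apply coeff_X_mul_congr
        intro q hq
        exact Qlem c hbound m hsm k q (by omega)
      rw [key]

lemma starS (hbound : ∀ n k, n < k → c n k = 0)
    (h0 : ∀ k, c 0 k = if k = 0 then 1 else 0)
    (hstep : ∀ n k, c (n + 1) k =
      (if 1 ≤ k then c n (k - 1) else 0) + ∑ j ∈ Finset.Icc (k + 2) n, c n j) :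
    ∀ k, A c (k + 1) = X * A c k * A c 0 :=
  fun k => PowerSeries.ext fun n => star c hbound h0 hstep n k

lemma T_succ (hbound : ∀ n k, n < k → c n k = 0) (a : ℕ) :
    T c a = A c a + T c (a + 1) := by
  ext n
  rw [map_add, coeff_T, coeff_T, coeff_A]
  by_cases h : a ≤ n
  · rw [Finset.Icc_eq_cons_Ioc h, Finset.sum_cons, Finset.Icc_add_one_left_eq_Ioc]
  · rw [Finset.Icc_eq_empty (by omega : ¬a ≤ n),
      Finset.Icc_eq_empty (by omega : ¬a + 1 ≤ n), hbound n a (by omega)]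
    simp

/-- Equation (B): `F = C + X*F*C`. -/
lemma eqB (hbound : ∀ n k, n < k → c n k = 0)
    (h0 : ∀ k, c 0 k = if k = 0 then 1 else 0)
    (hstep : ∀ n k, c (n + 1) k =
      (if 1 ≤ k then c n (k - 1) else 0) + ∑ j ∈ Finset.Icc (k + 2) n, c n j) :
    T c 0 = A c 0 + X * T c 0 * A c 0 := by
  ext n
  rw [map_add, coeff_T, coeff_A]
  have e1 : (∑ j ∈ Icc 0 n, (c n j : ℚ))
      = (c n 0 : ℚ) + ∑ k ∈ range n, (c n (k + 1) : ℚ) := by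
    rw [show Icc 0 n = range (n + 1) from by ext x; simp [Nat.lt_succ_iff],
      Finset.sum_range_succ']
    ring
  rw [e1]
  congr 1
  have e2 : ∀ k, (c n (k + 1) : ℚ) = coeff n (X * A c k * A c 0) := by
    intro k
    rw [← coeff_A, star c hbound h0 hstep n k]
  rw [Finset.sum_congr rfl fun k _ => e2 k]
  have e3 : ∑ k ∈ range n, coeff n (X * A c k * A c 0)
      = coeff n (X * (∑ k ∈ range n, A c k) * A c 0) := by
    rw [Finset.mul_sum, Finset.sum_mul, map_sum]
  rw [e3, mul_assoc, mul_assoc]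
  apply coeff_X_mul_congr
  intro q hq
  apply coeff_mul_congr
  intro r hr
  have h4 := sumA_coeff c hbound 0 n r (by omega)
  simpa using h4

end Stmt12Aux

open Stmt12Aux in
/-- walks on ℕ starting at 0 with rule (k) ↝ (0)(1)...(k-2)(k+1)
(moves to any position ≤ k-2, or to k+1). With f n the number of such walks of
length n and G = z·∑ f_n z^n, one has G(1+G) = z(1 + 2G + G² + G³). -/
theorem stmt_12 (c : ℕ → ℕ → ℕ)
    (h0 : ∀ k, c 0 k = if k = 0 then 1 else 0)
    (hbound : ∀ n k, n < k → c n k = 0)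
    (hstep : ∀ n k, c (n + 1) k =
      (if 1 ≤ k then c n (k - 1) else 0) + ∑ j ∈ Finset.Icc (k + 2) n, c n j)
    (f : ℕ → ℕ) (hf : ∀ n, f n = ∑ k ∈ Finset.range (n + 1), c n k)
    (G : PowerSeries ℚ) (hG : G = X * mk fun n => (f n : ℚ)) :
    G * (1 + G) = X * (1 + 2 * G + G ^ 2 + G ^ 3) := by
  have hFs : (PowerSeries.mk fun n => (f n : ℚ)) = T c 0 := by
    ext n
    rw [coeff_mk, coeff_T, hf n]
    rw [show Finset.Icc 0 n = Finset.range (n + 1) from by ext x; simp [Nat.lt_succ_iff]]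
    push_cast
    rfl
  rw [hFs] at hG
  subst hG
  have hA1 : A c 1 = X * A c 0 * A c 0 := starS c hbound h0 hstep 0
  have hb : T c 0 = A c 0 + X * T c 0 * A c 0 := eqB c hbound h0 hstep
  have hc : A c 0 = 1 + X * (T c 0 - A c 0 - A c 1) := by
    have t0 := T_succ c hbound 0
    have t1 := T_succ c hbound 1
    have h2 : T c 2 = T c 0 - A c 0 - A c 1 := by
      rw [t0, t1]; ring
    linear_combination A0_eq c h0 hstep + X * h2
  rw [hA1] at hc
  set C := A c 0 with hCdef
  set Fs := T c 0 with hFdef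
  linear_combination (X + X ^ 2 + X ^ 2 * Fs + 2 * X ^ 3 * Fs + X ^ 3 * C + X ^ 4 * C * Fs) * hb
    + (X + 2 * X ^ 2 * Fs + X ^ 3 * Fs ^ 2) * hc
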